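/- Let μ > 1 and r > 0. Then for every real t with |t| < 1, ∑_{k=0}^∞ Γ(μ+k) · (t^k/k!) · ∑_{n=1}^∞ 2 n^k / (r² + n)^{μ+k} = [2 Γ(μ) / (1−t)^μ] · ζ(μ, 1 + r²/(1−t)), where ζ(s,a) = ∑_{m=0}^∞ 1/(m+a)^s is the Hurwitz zeta function. -/

import Mathlib

open Filter Set

private lemma ratio_tendsto (μ : ℝ) :
    Tendsto (fun k : ℕ => (μ + k) / (k + 1)) atTop (nhds 1) := by
  have h1 : Tendsto (fun k : ℕ => ((k : ℝ) + 1)) atTop atTop :=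
    tendsto_atTop_add_const_right _ 1 tendsto_natCast_atTop_atTop
  have h2 := h1.const_div_atTop (μ - 1)
  have h3 : (fun k : ℕ => (μ + k) / (k + 1)) = fun k : ℕ => (μ - 1) / ((k:ℝ) + 1) + 1 := by
    funext k
    have : ((k:ℝ) + 1) ≠ 0 := by positivity
    field_simp
    ring
  rw [h3]
  simpa using h2.add_const 1

private lemma gammaCoef_pos {μ : ℝ} (hμ : 0 < μ) (k : ℕ) :
    0 < Real.Gamma (μ + k) / k.factorial :=
  div_pos (Real.Gamma_pos_of_pos (by positivity)) (by exact_mod_cast k.factorial_pos)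

private lemma gammaCoef_succ {μ : ℝ} (hμ : 0 < μ) (k : ℕ) :
    Real.Gamma (μ + (k + 1 : ℕ)) / ((k+1).factorial : ℝ)
      = ((μ + k) / (k + 1)) * (Real.Gamma (μ + k) / k.factorial) := by
  have h0 : μ + (k:ℝ) ≠ 0 := by positivity
  have h1 : μ + ((k + 1 : ℕ) : ℝ) = (μ + k) + 1 := by push_cast; ring
  rw [h1, Real.Gamma_add_one h0, Nat.factorial_succ]
  have hk : ((k.factorial : ℕ) : ℝ) ≠ 0 := Nat.cast_ne_zero.mpr k.factorial_ne_zero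
  have hk1 : ((k:ℝ) + 1) ≠ 0 := by positivity
  push_cast
  field_simp

private lemma summable_gamma_mul_pow (μ : ℝ) (hμ : 0 < μ) {y : ℝ} (hy : |y| < 1) :
    Summable (fun k : ℕ => Real.Gamma (μ + k) / k.factorial * y ^ k) := by
  have hl1 : (1 + |y|) / 2 < 1 := by linarith
  have hyl : |y| < (1 + |y|) / 2 := by linarith [abs_nonneg y]
  apply summable_of_ratio_norm_eventually_le hl1
  have htend : Tendsto (fun k : ℕ => (μ + k) / (k + 1) * |y|) atTop (nhds (1 * |y|)) :=
    (ratio_tendsto μ).mul_const _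
  rw [one_mul] at htend
  filter_upwards [htend.eventually_le_const hyl] with k hk
  have hpos := gammaCoef_pos hμ k
  have hpos' := gammaCoef_pos hμ (k + 1)
  have hkey : ‖Real.Gamma (μ + (k+1 : ℕ)) / (k+1).factorial * y ^ (k+1)‖
      = ((μ + k) / (k + 1) * |y|) * ‖Real.Gamma (μ + k) / k.factorial * y ^ k‖ := by
    rw [Real.norm_eq_abs, Real.norm_eq_abs, abs_mul, abs_mul, abs_pow, abs_pow,
      abs_of_pos hpos, abs_of_pos hpos', gammaCoef_succ hμ k, pow_succ]
    ring
  rw [hkey]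
  exact mul_le_mul_of_nonneg_right hk (norm_nonneg _)

private lemma summable_gamma_mul_pow' (μ : ℝ) (hμ : 0 < μ) {y : ℝ} (hy : |y| < 1) :
    Summable (fun k : ℕ => (μ + k) * (Real.Gamma (μ + k) / k.factorial) * y ^ k) := by
  apply (summable_gamma_mul_pow (μ + 1) (by linarith) hy).congr
  intro k
  rw [show μ + 1 + (k:ℝ) = (μ + k) + 1 by ring, Real.Gamma_add_one (by positivity)]
  ring

private lemma summable_deriv (μ : ℝ) (hμ : 0 < μ) {y : ℝ} (hy : |y| < 1) :
    Summable (fun k : ℕ => Real.Gamma (μ + k) / k.factorial * ((k:ℝ) * y ^ (k - 1))) := by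
  rw [← summable_nat_add_iff 1]
  apply (summable_gamma_mul_pow' μ hμ hy).congr
  intro k
  have : (k + 1 - 1 : ℕ) = k := rfl
  rw [this, gammaCoef_succ hμ k]
  have hk1 : ((k:ℝ) + 1) ≠ 0 := by positivity
  push_cast
  field_simp

private lemma hasDerivAt_F (μ : ℝ) (hμ : 0 < μ) {y : ℝ} (hy : y ∈ Ioo (-1:ℝ) 1) :
    HasDerivAt (fun z => ∑' k : ℕ, Real.Gamma (μ + k) / k.factorial * z ^ k)
      (∑' k : ℕ, Real.Gamma (μ + k) / k.factorial * ((k:ℝ) * y ^ (k - 1))) y := by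
  obtain ⟨h1, h2⟩ := hy
  have hy' : |y| < 1 := abs_lt.mpr ⟨h1, h2⟩
  set ρ : ℝ := (|y| + 1) / 2 with hρdef
  have hρpos : 0 < ρ := by positivity
  have hyρ : |y| < ρ := by simp only [hρdef]; linarith
  have hρ1 : |ρ| < 1 := by rw [abs_of_pos hρpos]; simp only [hρdef]; linarith [abs_nonneg y]
  apply hasDerivAt_tsum_of_isPreconnected (summable_deriv μ hμ hρ1) isOpen_Ioo
    (convex_Ioo (-ρ) ρ).isPreconnected
    (fun k z _ => (hasDerivAt_pow k z).const_mul (Real.Gamma (μ + k) / k.factorial))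
    (fun k z hz => ?_) ⟨by linarith, hρpos⟩
    (summable_gamma_mul_pow μ hμ (y := (0:ℝ)) (by simp)) (abs_lt.mp hyρ)
  have hz' : |z| ≤ ρ := le_of_lt (abs_lt.mpr hz)
  have hc := (gammaCoef_pos hμ k).le
  rw [Real.norm_eq_abs, abs_mul, abs_mul, abs_pow, abs_of_nonneg hc, Nat.abs_cast]
  gcongr

private lemma deriv_identity (μ : ℝ) (hμ : 0 < μ) {y : ℝ} (hy : |y| < 1) :
    (1 - y) * (∑' k : ℕ, Real.Gamma (μ + k) / k.factorial * ((k:ℝ) * y ^ (k - 1)))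
      = μ * ∑' k : ℕ, Real.Gamma (μ + k) / k.factorial * y ^ k := by
  have hF := summable_gamma_mul_pow μ hμ hy
  have hE := summable_gamma_mul_pow' μ hμ hy
  have hDsum := summable_deriv μ hμ hy
  have hk_sum : Summable (fun k : ℕ => (k:ℝ) * (Real.Gamma (μ + k) / k.factorial) * y ^ k) := by
    apply (hE.sub (hF.mul_left μ)).congr
    intro k; ring
  have hD : (∑' k : ℕ, Real.Gamma (μ + k) / k.factorial * ((k:ℝ) * y ^ (k - 1)))
      = ∑' k : ℕ, (μ + k) * (Real.Gamma (μ + k) / k.factorial) * y ^ k := by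
    rw [Summable.tsum_eq_zero_add hDsum]
    simp only [Nat.cast_zero, zero_mul, mul_zero, zero_add]
    apply tsum_congr
    intro k
    have h1 : (k + 1 - 1 : ℕ) = k := rfl
    rw [h1, gammaCoef_succ hμ k]
    have hk1 : ((k:ℝ) + 1) ≠ 0 := by positivity
    push_cast
    field_simp
  have hyD : y * (∑' k : ℕ, Real.Gamma (μ + k) / k.factorial * ((k:ℝ) * y ^ (k - 1)))
      = ∑' k : ℕ, (k:ℝ) * (Real.Gamma (μ + k) / k.factorial) * y ^ k := by
    rw [← tsum_mul_left]
    apply tsum_congr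
    intro k
    cases k with
    | zero => simp
    | succ k =>
        have h1 : (k + 1 - 1 : ℕ) = k := rfl
        rw [h1, pow_succ]
        push_cast
        ring
  have hsplit : ∑' k : ℕ, (μ + k) * (Real.Gamma (μ + k) / k.factorial) * y ^ k
      = μ * (∑' k : ℕ, Real.Gamma (μ + k) / k.factorial * y ^ k)
        + ∑' k : ℕ, (k:ℝ) * (Real.Gamma (μ + k) / k.factorial) * y ^ k := by
    rw [← tsum_mul_left, ← Summable.tsum_add (hF.mul_left μ) hk_sum]
    apply tsum_congr
    intro k; ring
  have expand : (1 - y) * (∑' k : ℕ, Real.Gamma (μ + k) / k.factorial * ((k:ℝ) * y ^ (k - 1)))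
      = (∑' k : ℕ, Real.Gamma (μ + k) / k.factorial * ((k:ℝ) * y ^ (k - 1)))
        - y * (∑' k : ℕ, Real.Gamma (μ + k) / k.factorial * ((k:ℝ) * y ^ (k - 1))) := by ring
  rw [expand, hyD, hD, hsplit]
  ring

private lemma binomial_sum (μ : ℝ) (hμ : 0 < μ) {y : ℝ} (hy : |y| < 1) :
    ∑' k : ℕ, Real.Gamma (μ + k) / k.factorial * y ^ k = Real.Gamma μ / (1 - y) ^ μ := by
  set F : ℝ → ℝ := fun z => ∑' k : ℕ, Real.Gamma (μ + k) / k.factorial * z ^ k with hFdef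
  set H : ℝ → ℝ := fun z => (1 - z) ^ μ * F z with hHdef
  have hH : ∀ z ∈ Ioo (-1:ℝ) 1, HasDerivAt H 0 z := by
    intro z hz
    have hz1 : 0 < 1 - z := by linarith [hz.2]
    have d1 : HasDerivAt (fun w : ℝ => (1 - w) ^ μ) (μ * (1 - z) ^ (μ - 1) * (-1)) z := by
      exact (Real.hasDerivAt_rpow_const (x := 1 - z) (p := μ) (Or.inl hz1.ne')).comp z
        ((hasDerivAt_id z).const_sub 1)
    have d2 := hasDerivAt_F μ hμ hz
    have hmul := d1.mul d2
    have hidz := deriv_identity μ hμ (abs_lt.mpr ⟨hz.1, hz.2⟩)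
    have hval : μ * (1 - z) ^ (μ - 1) * (-1) * F z
        + (1 - z) ^ μ * (∑' k : ℕ, Real.Gamma (μ + k) / k.factorial * ((k:ℝ) * z ^ (k - 1)))
        = 0 := by
      have hsplit : (1 - z) ^ μ = (1 - z) ^ (μ - 1) * (1 - z) := by
        have h := Real.rpow_add hz1 (μ - 1) 1
        rw [Real.rpow_one, sub_add_cancel] at h
        exact h
      rw [hsplit]
      linear_combination (1 - z) ^ (μ - 1) * hidz
    rw [← hval]
    exact hmul
  have key : ∀ z ∈ Ioo (-1:ℝ) 1, H z = H 0 := by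
    intro z hz
    rcases lt_trichotomy z 0 with h | h | h
    · have hsub : Icc z 0 ⊆ Ioo (-1:ℝ) 1 := fun w hw =>
        ⟨lt_of_lt_of_le hz.1 hw.1, lt_of_le_of_lt hw.2 one_pos⟩
      obtain ⟨c, hc, hc0⟩ := exists_hasDerivAt_eq_slope H (fun _ => (0:ℝ)) h
        (fun w hw => (hH w (hsub hw)).continuousAt.continuousWithinAt)
        (fun w hw => hH w (hsub (Ioo_subset_Icc_self hw)))
      have : H 0 - H z = 0 := by
        rcases div_eq_zero_iff.mp hc0.symm with h' | h'
        · exact h'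
        · exact absurd h' (by intro hh; linarith)
      linarith [this]
    · rw [h]
    · have hsub : Icc 0 z ⊆ Ioo (-1:ℝ) 1 := fun w hw =>
        ⟨lt_of_lt_of_le (by linarith) hw.1, lt_of_le_of_lt hw.2 hz.2⟩
      obtain ⟨c, hc, hc0⟩ := exists_hasDerivAt_eq_slope H (fun _ => (0:ℝ)) h
        (fun w hw => (hH w (hsub hw)).continuousAt.continuousWithinAt)
        (fun w hw => hH w (hsub (Ioo_subset_Icc_self hw)))
      have : H z - H 0 = 0 := by
        rcases div_eq_zero_iff.mp hc0.symm with h' | h'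
        · exact h'
        · exact absurd h' (by intro hh; linarith)
      linarith [this]
  have h0 : H 0 = Real.Gamma μ := by
    have hF0 : F 0 = Real.Gamma μ := by
      have h1 : F 0 = ∑' k : ℕ, Real.Gamma (μ + k) / k.factorial * (0:ℝ) ^ k := rfl
      rw [h1, tsum_eq_single 0 (fun k hk => by simp [zero_pow hk])]
      simp
    have h2 : H 0 = (1 - (0:ℝ)) ^ μ * F 0 := rfl
    rw [h2, hF0]
    simp [Real.one_rpow]
  have hy1 : 0 < 1 - y := by have := abs_lt.mp hy; linarith
  have hkey := key y ⟨(abs_lt.mp hy).1, (abs_lt.mp hy).2⟩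
  rw [h0] at hkey
  have hne : (1 - y) ^ μ ≠ 0 := (Real.rpow_pos_of_pos hy1 μ).ne'
  rw [eq_div_iff hne]
  have hkey' : (1 - y) ^ μ * F y = Real.Gamma μ := hkey
  show F y * (1 - y) ^ μ = Real.Gamma μ
  linear_combination hkey'

private lemma term_eq (μ r s : ℝ) (hr : 0 < r) (k n : ℕ) :
    Real.Gamma (μ + k) * (s ^ k / k.factorial)
        * (2 * ((n:ℝ) + 1) ^ k / (r ^ 2 + ((n:ℝ) + 1)) ^ (μ + k))
      = (2 / (r ^ 2 + ((n:ℝ) + 1)) ^ μ)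
        * (Real.Gamma (μ + k) / k.factorial
            * (s * (((n:ℝ) + 1) / (r ^ 2 + ((n:ℝ) + 1)))) ^ k) := by
  have hA : (0:ℝ) < r ^ 2 + ((n:ℝ) + 1) := by positivity
  rw [Real.rpow_add hA, Real.rpow_natCast, mul_pow, div_pow]
  have h1 : (r ^ 2 + ((n:ℝ) + 1)) ^ μ ≠ 0 := (Real.rpow_pos_of_pos hA μ).ne'
  have h2 : (r ^ 2 + ((n:ℝ) + 1)) ^ k ≠ (0:ℝ) := pow_ne_zero _ hA.ne'
  have h3 : (k.factorial : ℝ) ≠ 0 := Nat.cast_ne_zero.mpr k.factorial_ne_zero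
  field_simp

private lemma x_lt_one (r : ℝ) (hr : 0 < r) (n : ℕ) :
    ((n:ℝ) + 1) / (r ^ 2 + ((n:ℝ) + 1)) < 1 := by
  have hA : (0:ℝ) < r ^ 2 + ((n:ℝ) + 1) := by positivity
  rw [div_lt_one hA]
  nlinarith [sq_nonneg r]

private lemma sx_abs_lt (r : ℝ) (hr : 0 < r) {s : ℝ} (hs : |s| < 1) (n : ℕ) :
    |s * (((n:ℝ) + 1) / (r ^ 2 + ((n:ℝ) + 1)))| < 1 := by
  have hA : (0:ℝ) < r ^ 2 + ((n:ℝ) + 1) := by positivity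
  have hx0 : 0 ≤ ((n:ℝ) + 1) / (r ^ 2 + ((n:ℝ) + 1)) := by positivity
  rw [abs_mul, abs_of_nonneg hx0]
  calc |s| * (((n:ℝ) + 1) / (r ^ 2 + ((n:ℝ) + 1)))
      ≤ |s| * 1 := by
        exact mul_le_mul_of_nonneg_left (le_of_lt (x_lt_one r hr n)) (abs_nonneg s)
    _ < 1 := by rw [mul_one]; exact hs

private lemma mathieu_inner_summable (μ r : ℝ) (hμ : 0 < μ) (hr : 0 < r) {s : ℝ} (hs : |s| < 1)
    (n : ℕ) :
    Summable (fun k : ℕ => Real.Gamma (μ + k) * (s ^ k / k.factorial)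
        * (2 * ((n:ℝ) + 1) ^ k / (r ^ 2 + ((n:ℝ) + 1)) ^ (μ + k))) := by
  simp only [term_eq μ r s hr _ n]
  exact (summable_gamma_mul_pow μ hμ (sx_abs_lt r hr hs n)).mul_left _

private lemma mathieu_inner_sum (μ r : ℝ) (hμ : 0 < μ) (hr : 0 < r) {s : ℝ} (hs : |s| < 1) (n : ℕ) :
    ∑' k : ℕ, Real.Gamma (μ + k) * (s ^ k / k.factorial)
        * (2 * ((n:ℝ) + 1) ^ k / (r ^ 2 + ((n:ℝ) + 1)) ^ (μ + k))
      = 2 * Real.Gamma μ / ((1 - s) * ((n:ℝ) + 1) + r ^ 2) ^ μ := by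
  have hA : (0:ℝ) < r ^ 2 + ((n:ℝ) + 1) := by positivity
  have hs1 : 0 < 1 - s := by have := abs_lt.mp hs; linarith
  have hB : (0:ℝ) < (1 - s) * ((n:ℝ) + 1) + r ^ 2 := by positivity
  simp only [term_eq μ r s hr _ n]
  rw [tsum_mul_left, binomial_sum μ hμ (sx_abs_lt r hr hs n)]
  have h1sx : 1 - s * (((n:ℝ) + 1) / (r ^ 2 + ((n:ℝ) + 1)))
      = ((1 - s) * ((n:ℝ) + 1) + r ^ 2) / (r ^ 2 + ((n:ℝ) + 1)) := by
    field_simp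
    ring
  rw [h1sx, Real.div_rpow hB.le hA.le]
  have hAμ : (r ^ 2 + ((n:ℝ) + 1)) ^ μ ≠ 0 := (Real.rpow_pos_of_pos hA μ).ne'
  have hBμ : ((1 - s) * ((n:ℝ) + 1) + r ^ 2) ^ μ ≠ 0 := (Real.rpow_pos_of_pos hB μ).ne'
  field_simp

private lemma abs_term (μ r t : ℝ) (hμ : 0 < μ) (k n : ℕ) :
    |Real.Gamma (μ + k) * (t ^ k / k.factorial)
        * (2 * ((n:ℝ) + 1) ^ k / (r ^ 2 + ((n:ℝ) + 1)) ^ (μ + k))|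
      = Real.Gamma (μ + k) * (|t| ^ k / k.factorial)
        * (2 * ((n:ℝ) + 1) ^ k / (r ^ 2 + ((n:ℝ) + 1)) ^ (μ + k)) := by
  have hA : (0:ℝ) < r ^ 2 + ((n:ℝ) + 1) := by positivity
  have hG : 0 < Real.Gamma (μ + k) := Real.Gamma_pos_of_pos (by positivity)
  have hrest : (0:ℝ) ≤ 2 * ((n:ℝ) + 1) ^ k / (r ^ 2 + ((n:ℝ) + 1)) ^ (μ + k) := by
    have := Real.rpow_pos_of_pos hA (μ + k)
    positivity
  rw [abs_mul, abs_mul, abs_div, abs_pow, abs_of_pos hG,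
    abs_of_nonneg (by positivity : (0:ℝ) ≤ (k.factorial : ℝ)), abs_of_nonneg hrest]

/-- Generating function for generalized Mathieu-type series:
`∑_k Γ(μ+k) (tᵏ/k!) ∑_{n≥1} 2nᵏ/(r²+n)^{μ+k} = 2Γ(μ)/(1-t)^μ · ζ(μ, 1+r²/(1-t))`,
where `ζ(s,a) = ∑_{m≥0} 1/(m+a)^s` is the Hurwitz zeta function. -/
theorem mathieu_generating_function
    (μ r : ℝ) (hμ : 1 < μ) (hr : 0 < r)
    (t : ℝ) (ht : |t| < 1) :
    ∑' k : ℕ, Real.Gamma (μ + k) * (t ^ k / k.factorial) *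
      ∑' n : ℕ, 2 * ((n : ℝ) + 1) ^ k / (r ^ 2 + ((n : ℝ) + 1)) ^ (μ + k)
    = 2 * Real.Gamma μ / (1 - t) ^ μ *
      ∑' m : ℕ, 1 / ((m : ℝ) + (1 + r ^ 2 / (1 - t))) ^ μ := by
  have hμ0 : 0 < μ := by linarith
  have ht1 : 0 < 1 - t := by have := abs_lt.mp ht; linarith
  have ht2 : 0 < 1 - |t| := by linarith
  have habs : |(|t|)| < 1 := by rwa [abs_abs]
  have hΓ : 0 < Real.Gamma μ := Real.Gamma_pos_of_pos hμ0
  set F : ℕ → ℕ → ℝ := fun k n => Real.Gamma (μ + k) * (t ^ k / k.factorial) *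
      (2 * ((n:ℝ) + 1) ^ k / (r ^ 2 + ((n:ℝ) + 1)) ^ (μ + k)) with hFdef
  have step1 : ∑' k : ℕ, Real.Gamma (μ + k) * (t ^ k / k.factorial) *
      ∑' n : ℕ, 2 * ((n : ℝ) + 1) ^ k / (r ^ 2 + ((n : ℝ) + 1)) ^ (μ + k)
      = ∑' k : ℕ, ∑' n : ℕ, F k n := by
    apply tsum_congr; intro k; rw [← tsum_mul_left]
  have hbase : Summable (fun n : ℕ => 1 / ((n:ℝ) + 1) ^ μ) := by
    have h1 := Real.summable_one_div_nat_rpow.mpr hμ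
    have h2 := (summable_nat_add_iff 1).mpr h1
    apply h2.congr
    intro n
    push_cast
    rfl
  have hmaj : Summable
      (fun n : ℕ => 2 * Real.Gamma μ / ((1 - |t|) * ((n:ℝ) + 1) + r ^ 2) ^ μ) := by
    apply Summable.of_nonneg_of_le (g := fun n : ℕ =>
        2 * Real.Gamma μ / ((1 - |t|) * ((n:ℝ) + 1) + r ^ 2) ^ μ)
      (fun n => ?_) (fun n => ?_) (hbase.mul_left (2 * Real.Gamma μ / (1 - |t|) ^ μ))
    · have hBn : (0:ℝ) < (1 - |t|) * ((n:ℝ) + 1) + r ^ 2 := by positivity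
      exact div_nonneg (by positivity) (Real.rpow_nonneg hBn.le μ)
    · have hBn : (0:ℝ) < (1 - |t|) * ((n:ℝ) + 1) + r ^ 2 := by positivity
      have hCn : (0:ℝ) < (1 - |t|) * ((n:ℝ) + 1) := by positivity
      rw [div_mul_div_comm, mul_one, ← Real.mul_rpow ht2.le (by positivity)]
      have hstep : ((1 - |t|) * ((n:ℝ) + 1)) ^ μ ≤ ((1 - |t|) * ((n:ℝ) + 1) + r ^ 2) ^ μ :=
        Real.rpow_le_rpow hCn.le (by nlinarith [sq_nonneg r]) hμ0.le
      have hCμ : (0:ℝ) < ((1 - |t|) * ((n:ℝ) + 1)) ^ μ := Real.rpow_pos_of_pos hCn μ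
      exact div_le_div_of_nonneg_left (by positivity) hCμ hstep
  have habs_un : Summable (Function.uncurry fun (n k : ℕ) => F k n) := by
    rw [← summable_abs_iff]
    apply (summable_prod_of_nonneg (fun p => abs_nonneg _)).mpr
    refine ⟨fun n => ?_, ?_⟩
    · apply (mathieu_inner_summable μ r hμ0 hr habs n).congr
      intro k
      exact (abs_term μ r t hμ0 k n).symm
    · apply hmaj.congr
      intro n
      rw [← mathieu_inner_sum μ r hμ0 hr habs n]
      exact (tsum_congr fun k => (abs_term μ r t hμ0 k n).symm)
  have hswap : ∑' k : ℕ, ∑' n : ℕ, F k n = ∑' n : ℕ, ∑' k : ℕ, F k n :=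
    Summable.tsum_comm (f := fun (n k : ℕ) => F k n) habs_un
  rw [step1, hswap]
  have step3 : ∑' n : ℕ, ∑' k : ℕ, F k n
      = ∑' n : ℕ, 2 * Real.Gamma μ / ((1 - t) * ((n:ℝ) + 1) + r ^ 2) ^ μ :=
    tsum_congr fun n => mathieu_inner_sum μ r hμ0 hr ht n
  rw [step3, ← tsum_mul_left]
  apply tsum_congr
  intro n
  have hdpos : (0:ℝ) < (n:ℝ) + (1 + r ^ 2 / (1 - t)) := by positivity
  have hbn : (1 - t) * ((n:ℝ) + 1) + r ^ 2
      = (1 - t) * ((n:ℝ) + (1 + r ^ 2 / (1 - t))) := by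
    field_simp
    ring
  rw [hbn, Real.mul_rpow ht1.le hdpos.le]
  have hX : (0:ℝ) < ((n:ℝ) + (1 + r ^ 2 / (1 - t))) ^ μ := Real.rpow_pos_of_pos hdpos μ
  have hT : (0:ℝ) < (1 - t) ^ μ := Real.rpow_pos_of_pos ht1 μ
  field_simp
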